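/- arXiv:math/0311232 — 4 statements merged into one kernel-verified Lean document; each statement's English description precedes it below -/
import Mathlib

section
/- Let φ : ℝ → ℝ be twice differentiable, positive on an interval I containing t₀, and satisfy φ'' - φ ≥ 0 on I. Define φ₀(t) = φ(t₀)cosh(t - t₀) + φ'(t₀)sinh(t - t₀). Then φ(t) ≥ φ₀(t) for all t ∈ I. -/
theorem stmt2 (φ : ℝ → ℝ) (I : Set ℝ) (hI : I.OrdConnected)
    (hd1 : Differentiable ℝ φ) (hd2 : Differentiable ℝ (deriv φ))
    (t₀ : ℝ) (ht₀ : t₀ ∈ I)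
    (hpos : ∀ t ∈ I, 0 < φ t)
    (hineq : ∀ t ∈ I, 0 ≤ deriv (deriv φ) t - φ t) :
    ∀ t ∈ I, φ t₀ * Real.cosh (t - t₀) + deriv φ t₀ * Real.sinh (t - t₀) ≤ φ t := by
  have hconv : Convex ℝ I := convex_iff_ordConnected.mpr hI
  set c := φ t₀ with hc
  set b := deriv φ t₀ with hb
  set u : ℝ → ℝ := fun t => φ t - (c * Real.cosh (t - t₀) + b * Real.sinh (t - t₀)) with hu_def
  set v : ℝ → ℝ := fun t => deriv φ t - (c * Real.sinh (t - t₀) + b * Real.cosh (t - t₀))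
    with hv_def
  set w : ℝ → ℝ := fun t => deriv (deriv φ) t - (c * Real.cosh (t - t₀) + b * Real.sinh (t - t₀))
    with hw_def
  have hsub : ∀ t : ℝ, HasDerivAt (fun s => s - t₀) 1 t := fun t => (hasDerivAt_id t).sub_const t₀
  have hcosh : ∀ t : ℝ, HasDerivAt (fun s => Real.cosh (s - t₀)) (Real.sinh (t - t₀)) t := by
    intro t
    simpa [Function.comp_def] using (Real.hasDerivAt_cosh (t - t₀)).comp t (hsub t)
  have hsinh : ∀ t : ℝ, HasDerivAt (fun s => Real.sinh (s - t₀)) (Real.cosh (t - t₀)) t := by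
    intro t
    simpa [Function.comp_def] using (Real.hasDerivAt_sinh (t - t₀)).comp t (hsub t)
  have hu : ∀ t, HasDerivAt u (v t) t := fun t =>
    (hd1 t).hasDerivAt.sub (((hcosh t).const_mul c).add ((hsinh t).const_mul b))
  have hv : ∀ t, HasDerivAt v (w t) t := fun t =>
    (hd2 t).hasDerivAt.sub (((hsinh t).const_mul c).add ((hcosh t).const_mul b))
  have hwu : ∀ t ∈ I, 0 ≤ w t - u t := by
    intro t ht
    have := hineq t ht
    simp only [hu_def, hw_def]
    ring_nf
    linarith
  have hu0 : u t₀ = 0 := by simp [hu_def, hc]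
  have hv0 : v t₀ = 0 := by simp [hv_def, hb]
  -- g(t) = exp(-t) * (v t + u t), derivative exp(-t) * (w t - u t) ≥ 0
  have hnegexp : ∀ t : ℝ, HasDerivAt (fun s => Real.exp (-s)) (-Real.exp (-t)) t := by
    intro t
    simpa [Function.comp_def] using (Real.hasDerivAt_exp (-t)).comp t (hasDerivAt_id t).neg
  have hposexp : ∀ t : ℝ, HasDerivAt (fun s => Real.exp s) (Real.exp t) t := Real.hasDerivAt_exp
  have hg : ∀ t, HasDerivAt (fun s => Real.exp (-s) * (v s + u s))
      (Real.exp (-t) * (w t - u t)) t := by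
    intro t
    have := (hnegexp t).mul ((hv t).add (hu t))
    refine this.congr_deriv ?_
    simp only [Pi.add_apply, Pi.sub_apply]
    ring
  have hh : ∀ t, HasDerivAt (fun s => Real.exp s * (v s - u s))
      (Real.exp t * (w t - u t)) t := by
    intro t
    have := (hposexp t).mul ((hv t).sub (hu t))
    refine this.congr_deriv ?_
    simp only [Pi.add_apply, Pi.sub_apply]
    ring
  have hgmono : MonotoneOn (fun s => Real.exp (-s) * (v s + u s)) I := by
    have hdiff : Differentiable ℝ (fun s => Real.exp (-s) * (v s + u s)) :=
      fun t => (hg t).differentiableAt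
    refine monotoneOn_of_deriv_nonneg hconv hdiff.continuous.continuousOn
      hdiff.differentiableOn ?_
    intro x hx
    rw [(hg x).deriv]
    exact mul_nonneg (Real.exp_nonneg _) (hwu x (interior_subset hx))
  have hhmono : MonotoneOn (fun s => Real.exp s * (v s - u s)) I := by
    have hdiff : Differentiable ℝ (fun s => Real.exp s * (v s - u s)) :=
      fun t => (hh t).differentiableAt
    refine monotoneOn_of_deriv_nonneg hconv hdiff.continuous.continuousOn
      hdiff.differentiableOn ?_
    intro x hx
    rw [(hh x).deriv]
    exact mul_nonneg (Real.exp_nonneg _) (hwu x (interior_subset hx))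
  -- main claim: u ≥ 0 on I
  have key : ∀ t ∈ I, 0 ≤ u t := by
    intro t ht
    rcases le_total t₀ t with hle | hle
    · -- forward direction
      have hJ : Set.Icc t₀ t ⊆ I := hI.out ht₀ ht
      -- W s = exp s * u s is monotone on Icc t₀ t
      have hW : ∀ s, HasDerivAt (fun r => Real.exp r * u r) (Real.exp s * (u s + v s)) s := by
        intro s
        have := (hposexp s).mul (hu s)
        refine this.congr_deriv ?_
        ring
      have hWmono : MonotoneOn (fun r => Real.exp r * u r) (Set.Icc t₀ t) := by
        have hdiff : Differentiable ℝ (fun r => Real.exp r * u r) :=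
          fun s => (hW s).differentiableAt
        refine monotoneOn_of_deriv_nonneg (convex_Icc _ _) hdiff.continuous.continuousOn
          hdiff.differentiableOn ?_
        intro x hx
        have hxI : x ∈ I := hJ (interior_subset hx)
        have hxmem : x ∈ Set.Icc t₀ t := interior_subset hx
        have hg0 : 0 ≤ Real.exp (-x) * (v x + u x) := by
          have := hgmono ht₀ hxI hxmem.1
          simpa [hu0, hv0] using this
        have huv : 0 ≤ v x + u x := nonneg_of_mul_nonneg_right hg0 (Real.exp_pos _)
        rw [(hW x).deriv]
        nlinarith [Real.exp_pos x]
      have := hWmono (Set.left_mem_Icc.mpr hle) (Set.right_mem_Icc.mpr hle) hle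
      simp only [hu0, mul_zero] at this
      nlinarith [Real.exp_pos t]
    · -- backward direction
      have hJ : Set.Icc t t₀ ⊆ I := hI.out ht ht₀
      have hW : ∀ s, HasDerivAt (fun r => Real.exp (-r) * u r) (Real.exp (-s) * (v s - u s)) s := by
        intro s
        have := (hnegexp s).mul (hu s)
        refine this.congr_deriv ?_
        ring
      have hWanti : AntitoneOn (fun r => Real.exp (-r) * u r) (Set.Icc t t₀) := by
        have hdiff : Differentiable ℝ (fun r => Real.exp (-r) * u r) :=
          fun s => (hW s).differentiableAt
        refine antitoneOn_of_deriv_nonpos (convex_Icc _ _) hdiff.continuous.continuousOn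
          hdiff.differentiableOn ?_
        intro x hx
        have hxI : x ∈ I := hJ (interior_subset hx)
        have hxmem : x ∈ Set.Icc t t₀ := interior_subset hx
        have hh0 : Real.exp x * (v x - u x) ≤ 0 := by
          have := hhmono hxI ht₀ hxmem.2
          simpa [hu0, hv0] using this
        have huv : v x - u x ≤ 0 := nonpos_of_mul_nonpos_right hh0 (Real.exp_pos _)
        rw [(hW x).deriv]
        nlinarith [Real.exp_pos (-x)]
      have := hWanti (Set.left_mem_Icc.mpr hle) (Set.right_mem_Icc.mpr hle) hle
      simp only [hu0, mul_zero] at this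
      nlinarith [Real.exp_pos (-t)]
  intro t ht
  have := key t ht
  simp only [hu_def] at this
  linarith
end

section
/- Let φ, φ₀ : ℝ → ℝ be positive and twice differentiable on an interval I containing t₀, with φ'' ≥ φ and φ₀'' = φ₀ on I, φ(t₀) = φ₀(t₀), and φ'(t₀) = φ₀'(t₀). Define h = φ'/φ, h₀ = φ₀'/φ₀, and χ(t) = exp(∫_{t₀}^t (h(τ) + h₀(τ))dτ)·(h(t) − h₀(t)). Then χ'(t) ≥ 0 for all t ∈ I and χ(t₀) = 0. -/
theorem stmt4 (φ φ₀ : ℝ → ℝ) (I : Set ℝ) (hI : I.OrdConnected)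
    (hd1 : Differentiable ℝ φ) (hd2 : Differentiable ℝ (deriv φ))
    (hd1' : Differentiable ℝ φ₀) (hd2' : Differentiable ℝ (deriv φ₀))
    (t₀ : ℝ) (ht₀ : t₀ ∈ I)
    (hpos : ∀ t ∈ I, 0 < φ t) (hpos' : ∀ t ∈ I, 0 < φ₀ t)
    (hφ : ∀ t ∈ I, φ t ≤ deriv (deriv φ) t)
    (hφ₀ : ∀ t ∈ I, deriv (deriv φ₀) t = φ₀ t)
    (hval : φ t₀ = φ₀ t₀) (hder : deriv φ t₀ = deriv φ₀ t₀)
    (h h₀ χ : ℝ → ℝ)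
    (hh : h = fun t => deriv φ t / φ t)
    (hh₀ : h₀ = fun t => deriv φ₀ t / φ₀ t)
    (hχ : χ = fun t => Real.exp (∫ τ in t₀..t, (h τ + h₀ τ)) * (h t - h₀ t)) :
    (∀ t ∈ I, 0 ≤ deriv χ t) ∧ χ t₀ = 0 := by
  constructor
  · intro t ht
    have hφt : 0 < φ t := hpos t ht
    have hφ₀t : 0 < φ₀ t := hpos' t ht
    -- continuity on uIcc
    have hsub : Set.uIcc t₀ t ⊆ I := hI.uIcc_subset ht₀ ht
    have hcontOn : ContinuousOn (fun τ => h τ + h₀ τ) (Set.uIcc t₀ t) := by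
      subst hh hh₀
      apply ContinuousOn.add
      · exact ContinuousOn.div hd2.continuous.continuousOn hd1.continuous.continuousOn
          (fun x hx => (hpos x (hsub hx)).ne')
      · exact ContinuousOn.div hd2'.continuous.continuousOn hd1'.continuous.continuousOn
          (fun x hx => (hpos' x (hsub hx)).ne')
    have hint : IntervalIntegrable (fun τ => h τ + h₀ τ) MeasureTheory.volume t₀ t :=
      hcontOn.intervalIntegrable
    have hmeas : StronglyMeasurableAtFilter (fun τ => h τ + h₀ τ) (nhds t) := by
      subst hh hh₀
      exact (((measurable_deriv φ).div hd1.continuous.measurable).add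
        ((measurable_deriv φ₀).div hd1'.continuous.measurable)).stronglyMeasurable.stronglyMeasurableAtFilter
    have hcontAt : ContinuousAt (fun τ => h τ + h₀ τ) t := by
      subst hh hh₀
      exact ((hd2.continuous.continuousAt.div hd1.continuous.continuousAt hφt.ne')).add
        ((hd2'.continuous.continuousAt.div hd1'.continuous.continuousAt hφ₀t.ne'))
    have hF : HasDerivAt (fun x => ∫ τ in t₀..x, (h τ + h₀ τ)) (h t + h₀ t) t :=
      intervalIntegral.integral_hasDerivAt_right hint hmeas hcontAt
    -- derivatives of h and h₀ at t
    have hDh : HasDerivAt h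
        ((deriv (deriv φ) t * φ t - deriv φ t * deriv φ t) / (φ t) ^ 2) t := by
      rw [hh]
      exact ((hd2 t).hasDerivAt).div ((hd1 t).hasDerivAt) hφt.ne'
    have hDh₀ : HasDerivAt h₀
        ((deriv (deriv φ₀) t * φ₀ t - deriv φ₀ t * deriv φ₀ t) / (φ₀ t) ^ 2) t := by
      rw [hh₀]
      exact ((hd2' t).hasDerivAt).div ((hd1' t).hasDerivAt) hφ₀t.ne'
    have hχD : HasDerivAt χ
        (Real.exp (∫ τ in t₀..t, (h τ + h₀ τ)) * (h t + h₀ t) * (h t - h₀ t)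
          + Real.exp (∫ τ in t₀..t, (h τ + h₀ τ)) *
            ((deriv (deriv φ) t * φ t - deriv φ t * deriv φ t) / (φ t) ^ 2
              - (deriv (deriv φ₀) t * φ₀ t - deriv φ₀ t * deriv φ₀ t) / (φ₀ t) ^ 2)) t := by
      rw [hχ]
      exact (hF.exp).mul (hDh.sub hDh₀)
    rw [hχD.deriv]
    have hE : (0:ℝ) ≤ Real.exp (∫ τ in t₀..t, (h τ + h₀ τ)) := (Real.exp_pos _).le
    have key : (0:ℝ) ≤ (h t + h₀ t) * (h t - h₀ t)
        + ((deriv (deriv φ) t * φ t - deriv φ t * deriv φ t) / (φ t) ^ 2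
          - (deriv (deriv φ₀) t * φ₀ t - deriv φ₀ t * deriv φ₀ t) / (φ₀ t) ^ 2) := by
      have h1 : h t = deriv φ t / φ t := by rw [hh]
      have h2 : h₀ t = deriv φ₀ t / φ₀ t := by rw [hh₀]
      have hc : φ t ≤ deriv (deriv φ) t := hφ t ht
      have hc₀ : deriv (deriv φ₀) t = φ₀ t := hφ₀ t ht
      have heq : (h t + h₀ t) * (h t - h₀ t)
          + ((deriv (deriv φ) t * φ t - deriv φ t * deriv φ t) / (φ t) ^ 2
            - (deriv (deriv φ₀) t * φ₀ t - deriv φ₀ t * deriv φ₀ t) / (φ₀ t) ^ 2)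
          = deriv (deriv φ) t / φ t - deriv (deriv φ₀) t / φ₀ t := by
        rw [h1, h2]; field_simp; ring
      rw [heq, hc₀, div_self hφ₀t.ne']
      have : (1:ℝ) ≤ deriv (deriv φ) t / φ t := (one_le_div hφt).mpr hc
      linarith
    calc (0:ℝ) ≤ Real.exp (∫ τ in t₀..t, (h τ + h₀ τ)) * ((h t + h₀ t) * (h t - h₀ t)
        + ((deriv (deriv φ) t * φ t - deriv φ t * deriv φ t) / (φ t) ^ 2
          - (deriv (deriv φ₀) t * φ₀ t - deriv φ₀ t * deriv φ₀ t) / (φ₀ t) ^ 2)) :=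
          mul_nonneg hE key
      _ = _ := by ring
  · rw [hχ]
    simp only [intervalIntegral.integral_same, Real.exp_zero, one_mul, hh, hh₀, hval, hder,
      sub_self]
end

section
/- Let E be a real inner product space, I : ℝ → E twice differentiable, and R : ℝ → (E →ₗ E) with I'' + R(I) = 0 and ⟨R(t)v, v⟩ ≤ 0 for all t, v. If ‖I(t)‖ = o(t) as t → ±∞ (sub-linear growth), then ‖I(t)‖ is constant, I'(t) = 0 for all t, and ⟨R(t)(I(t)), I(t)⟩ = 0 for all t. -/
open RealInnerProductSpace Filter Asymptotics

theorem stmt7 (E : Type*) [NormedAddCommGroup E] [InnerProductSpace ℝ E]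
    (I : ℝ → E) (hd1 : Differentiable ℝ I) (hd2 : Differentiable ℝ (deriv I))
    (R : ℝ → E →ₗ[ℝ] E)
    (hJacobi : ∀ t, deriv (deriv I) t + R t (I t) = 0)
    (hK : ∀ t, ∀ v : E, ⟪R t v, v⟫ ≤ 0)
    (hsubTop : (fun t => ‖I t‖) =o[Filter.atTop] fun t : ℝ => |t|)
    (hsubBot : (fun t => ‖I t‖) =o[Filter.atBot] fun t : ℝ => |t|) :
    (∀ s t, ‖I s‖ = ‖I t‖) ∧ (∀ t, deriv I t = 0) ∧
      (∀ t, ⟪R t (I t), I t⟫ = 0) := by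
  set u : ℝ → ℝ := fun t => ⟪I t, I t⟫ + 1 with hudef
  set du : ℝ → ℝ := fun t => 2 * ⟪deriv I t, I t⟫ with hdudef
  set ddu : ℝ → ℝ := fun t => 2 * (‖deriv I t‖ ^ 2 - ⟪R t (I t), I t⟫) with hddudef
  have hunorm : ∀ t, u t = ‖I t‖ ^ 2 + 1 := fun t => by
    simp [hudef, real_inner_self_eq_norm_sq]
  have hupos : ∀ t, 0 < u t := fun t => by rw [hunorm]; positivity
  have hu' : ∀ t, HasDerivAt u (du t) t := by
    intro t
    have h := ((hd1 t).hasDerivAt.inner ℝ (hd1 t).hasDerivAt).add_const 1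
    refine h.congr_deriv ?_
    simp only [hdudef, real_inner_comm (I t) (deriv I t)]; ring
  have hderivu : deriv u = du := funext fun t => (hu' t).deriv
  have hdu' : ∀ t, HasDerivAt du (ddu t) t := by
    intro t
    have h := ((hd2 t).hasDerivAt.inner ℝ (hd1 t).hasDerivAt).const_mul 2
    have hI2 : deriv (deriv I) t = -(R t (I t)) := eq_neg_of_add_eq_zero_left (hJacobi t)
    refine h.congr_deriv ?_
    rw [hI2, inner_neg_left, real_inner_self_eq_norm_sq]
    ring
  have hddunn : ∀ t, 0 ≤ ddu t := by
    intro t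
    have h1 := hK t (I t)
    have h2 : (0:ℝ) ≤ ‖deriv I t‖ ^ 2 := sq_nonneg _
    simp only [hddudef]
    nlinarith
  set G : ℝ → ℝ := fun t => Real.sqrt (u t) with hGdef
  have hG' : ∀ t, HasDerivAt G (du t / (2 * Real.sqrt (u t))) t := fun t =>
    (hu' t).sqrt (hupos t).ne'
  have hderivG : deriv G = fun t => du t / (2 * Real.sqrt (u t)) :=
    funext fun t => (hG' t).deriv
  have hsqrtpos : ∀ t, 0 < Real.sqrt (u t) := fun t => Real.sqrt_pos.2 (hupos t)
  have hG'' : ∀ t, HasDerivAt (deriv G)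
      ((ddu t * (2 * Real.sqrt (u t)) - du t * (2 * (du t / (2 * Real.sqrt (u t))))) /
        (2 * Real.sqrt (u t)) ^ 2) t := by
    intro t
    rw [hderivG]
    exact (hdu' t).div (((hu' t).sqrt (hupos t).ne').const_mul 2)
      (by have := hsqrtpos t; positivity)
  have hG''nn : ∀ t, 0 ≤ deriv (deriv G) t := by
    intro t
    rw [(hG'' t).deriv]
    have hs2 : Real.sqrt (u t) ^ 2 = u t := Real.sq_sqrt (hupos t).le
    have hspos : 0 < Real.sqrt (u t) := hsqrtpos t
    have hCS : ⟪deriv I t, I t⟫ ^ 2 ≤ ‖deriv I t‖ ^ 2 * ‖I t‖ ^ 2 := by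
      have h := abs_real_inner_le_norm (deriv I t) (I t)
      nlinarith [abs_nonneg (⟪deriv I t, I t⟫ : ℝ), sq_abs (⟪deriv I t, I t⟫ : ℝ),
        norm_nonneg (deriv I t), norm_nonneg (I t)]
    have hkey : du t ^ 2 ≤ 2 * ddu t * u t := by
      have h1 := hK t (I t)
      have h2 : ‖I t‖ ^ 2 ≤ u t := by rw [hunorm]; linarith
      have h3 : (0:ℝ) ≤ ‖deriv I t‖ ^ 2 := sq_nonneg _
      simp only [hdudef, hddudef]
      nlinarith [hupos t]
    apply div_nonneg _ (sq_nonneg _)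
    have heq : du t * (2 * (du t / (2 * Real.sqrt (u t)))) = du t ^ 2 / Real.sqrt (u t) := by
      field_simp
    rw [heq, sub_nonneg, div_le_iff₀ hspos]
    nlinarith [hddunn t]
  have hGdiff : Differentiable ℝ G := fun t => (hG' t).differentiableAt
  have hdGdiff : Differentiable ℝ (deriv G) := fun t => (hG'' t).differentiableAt
  have hconv : ConvexOn ℝ Set.univ G := by
    apply convexOn_univ_of_deriv2_nonneg hGdiff hdGdiff
    intro x
    have h2 : deriv^[2] G x = deriv (deriv G) x := by
      simp [Function.iterate_succ, Function.iterate_one]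
    rw [h2]
    exact hG''nn x
  have hGle : ∀ t, G t ≤ ‖I t‖ + 1 := by
    intro t
    simp only [hGdef]
    calc Real.sqrt (u t) ≤ Real.sqrt ((‖I t‖ + 1) ^ 2) := by
          apply Real.sqrt_le_sqrt
          rw [hunorm]; nlinarith [norm_nonneg (I t)]
      _ = ‖I t‖ + 1 := Real.sqrt_sq (by positivity)
  have hslope0 : ∀ a b : ℝ, a < b → G a = G b := by
    intro a b hab
    have hle : slope G a b ≤ 0 := by
      have htend : Tendsto (fun t => (‖I t‖ + 1 - G b) / (t - b)) atTop (nhds 0) := by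
        apply IsLittleO.tendsto_div_nhds_zero
        have h1 : (fun t : ℝ => ‖I t‖) =o[atTop] fun t : ℝ => t - b := by
          refine hsubTop.trans_isBigO (IsBigO.of_bound 2 ?_)
          filter_upwards [eventually_ge_atTop (2 * |b| + 1)] with t ht
          have hb1 := abs_nonneg b
          have hb2 := neg_abs_le b
          have hb3 := le_abs_self b
          rw [Real.norm_eq_abs, Real.norm_eq_abs, abs_abs,
            abs_of_nonneg (by linarith : (0:ℝ) ≤ t),
            abs_of_nonneg (by linarith : (0:ℝ) ≤ t - b)]
          linarith
        have h2 : (fun _ : ℝ => (1 : ℝ) - G b) =o[atTop] fun t : ℝ => t - b := by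
          apply Asymptotics.isLittleO_const_left.2
          right
          have h3 : Tendsto (fun t : ℝ => t - b) atTop atTop :=
            tendsto_atTop_add_const_right _ _ tendsto_id
          exact tendsto_abs_atTop_atTop.comp h3
        have h4 := h1.add h2
        refine h4.congr_left (fun t => ?_)
        ring
      refine ge_of_tendsto htend ?_
      filter_upwards [eventually_ge_atTop (b + 1)] with t ht
      have hbt : b < t := by linarith
      have hmono := hconv.slope_mono_adjacent (Set.mem_univ a) (Set.mem_univ t) hab hbt
      rw [slope_def_field]
      refine hmono.trans ?_
      gcongr
      · exact hGle t
    have hge : 0 ≤ slope G a b := by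
      have htend : Tendsto (fun t => (G a - 1 - ‖I t‖) / (a - t)) atBot (nhds 0) := by
        apply IsLittleO.tendsto_div_nhds_zero
        have h1 : (fun t : ℝ => ‖I t‖) =o[atBot] fun t : ℝ => a - t := by
          refine hsubBot.trans_isBigO (IsBigO.of_bound 2 ?_)
          filter_upwards [eventually_le_atBot (-(2 * |a|) - 1)] with t ht
          have hb1 := abs_nonneg a
          have hb2 := neg_abs_le a
          have hb3 := le_abs_self a
          rw [Real.norm_eq_abs, Real.norm_eq_abs, abs_abs,
            abs_of_nonpos (by linarith : t ≤ (0:ℝ)),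
            abs_of_nonneg (by linarith : (0:ℝ) ≤ a - t)]
          linarith
        have h2 : (fun _ : ℝ => G a - 1 : ℝ → ℝ) =o[atBot] fun t : ℝ => a - t := by
          apply Asymptotics.isLittleO_const_left.2
          right
          have h3 : Tendsto (fun t : ℝ => a - t) atBot atTop :=
            tendsto_atTop_add_const_left _ _ tendsto_neg_atBot_atTop
          exact tendsto_abs_atTop_atTop.comp h3
        exact h2.sub h1
      refine le_of_tendsto htend ?_
      filter_upwards [eventually_le_atBot (a - 1)] with t ht
      have hta : t < a := by linarith
      have hmono := hconv.slope_mono_adjacent (Set.mem_univ t) (Set.mem_univ b) hta hab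
      rw [slope_def_field]
      refine le_trans ?_ hmono
      have h5 : G a - 1 - ‖I t‖ ≤ G a - G t := by have := hGle t; linarith
      gcongr
    have : slope G a b = 0 := le_antisymm hle hge
    rw [slope_def_field] at this
    have hne : b - a ≠ 0 := by linarith
    field_simp at this
    linarith
  have hGconst : ∀ s t : ℝ, G s = G t := by
    intro s t
    rcases lt_trichotomy s t with h | h | h
    · exact hslope0 s t h
    · rw [h]
    · exact (hslope0 t s h).symm
  have huconst : ∀ s t : ℝ, u s = u t := by
    intro s t
    have h1 : u s = G s ^ 2 := (Real.sq_sqrt (hupos s).le).symm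
    have h2 : u t = G t ^ 2 := (Real.sq_sqrt (hupos t).le).symm
    rw [h1, h2, hGconst s t]
  have hnormconst : ∀ s t : ℝ, ‖I s‖ = ‖I t‖ := by
    intro s t
    have h := huconst s t
    rw [hunorm, hunorm] at h
    nlinarith [norm_nonneg (I s), norm_nonneg (I t)]
  have hueq : u = fun _ => u 0 := funext fun t => huconst t 0
  have hderivu0 : deriv u = fun _ => (0:ℝ) := by
    rw [hueq]
    funext t
    exact deriv_const t (u 0)
  have hdu0 : du = fun _ => (0:ℝ) := by rw [← hderivu]; exact hderivu0
  have hddu0 : ∀ t, ddu t = 0 := by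
    intro t
    have h := (hdu' t).deriv
    rw [hdu0] at h
    simp at h
    exact h.symm
  refine ⟨hnormconst, fun t => ?_, fun t => ?_⟩
  · have h := hddu0 t
    simp only [hddudef] at h
    have h1 := hK t (I t)
    have h2 : ‖deriv I t‖ ^ 2 = 0 := by nlinarith [sq_nonneg ‖deriv I t‖]
    have h3 : ‖deriv I t‖ = 0 := by nlinarith [norm_nonneg (deriv I t)]
    exact norm_eq_zero.mp h3
  · have h := hddu0 t
    simp only [hddudef] at h
    have h1 := hK t (I t)
    nlinarith [sq_nonneg ‖deriv I t‖]
end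

section
/- Let E be a real inner product space, I : ℝ → E twice differentiable, and R : ℝ → (E →ₗ E) with I'' + R(I) = 0 and ⟨R(t)v, v⟩ ≤ −‖v‖² for all t, v. If ‖I(t)‖ = o(e^{|t|}) as t → ±∞, then I ≡ 0. -/
open RealInnerProductSpace

open Filter Real in
private lemma growth_aux (u p q : ℝ → ℝ)
    (hu : ∀ t, HasDerivAt u (p t) t)
    (hp : ∀ t, HasDerivAt p (q t) t)
    (hq : ∀ t, u t ≤ q t)
    (htop : ∀ ε > (0:ℝ), ∀ᶠ t in atTop, u t ≤ ε * Real.exp t)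
    (hbot : ∀ ε > (0:ℝ), ∀ᶠ t in atBot, u t ≤ ε * Real.exp (-t)) :
    ∀ t, u t ≤ 0 := by
  intro t₀
  by_contra hcon
  push_neg at hcon
  set Z : ℝ → ℝ := fun t => (p t - u t) * Real.exp t with hZdef
  set W : ℝ → ℝ := fun t => (p t + u t) * Real.exp (-t) with hWdef
  have hZ : ∀ t, HasDerivAt Z ((q t - u t) * Real.exp t) t := by
    intro t
    have h := ((hp t).sub (hu t)).mul (Real.hasDerivAt_exp t)
    exact h.congr_deriv (by simp only [Pi.sub_apply]; ring)
  have hexpneg : ∀ t : ℝ, HasDerivAt (fun s : ℝ => Real.exp (-s)) (-Real.exp (-t)) t := by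
    intro t
    have h := (hasDerivAt_neg t).exp
    convert h using 1
    ring
  have hW : ∀ t, HasDerivAt W ((q t - u t) * Real.exp (-t)) t := by
    intro t
    have h := ((hp t).add (hu t)).mul (hexpneg t)
    exact h.congr_deriv (by simp only [Pi.add_apply]; ring)
  have hZmono : Monotone Z :=
    monotone_of_deriv_nonneg (fun t => (hZ t).differentiableAt) (fun t => by
      rw [(hZ t).deriv]
      exact mul_nonneg (sub_nonneg.2 (hq t)) (Real.exp_pos t).le)
  have hWmono : Monotone W :=
    monotone_of_deriv_nonneg (fun t => (hW t).differentiableAt) (fun t => by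
      rw [(hW t).deriv]
      exact mul_nonneg (sub_nonneg.2 (hq t)) (Real.exp_pos (-t)).le)
  have he2 : ∀ t : ℝ, HasDerivAt (fun s : ℝ => Real.exp (2 * s)) (2 * Real.exp (2 * t)) t := by
    intro t
    have h := ((hasDerivAt_id t).const_mul (2:ℝ)).exp
    simp only [id_eq] at h
    convert h using 1
    ring
  have hen2 : ∀ t : ℝ, HasDerivAt (fun s : ℝ => Real.exp (-(2 * s))) (-2 * Real.exp (-(2 * t))) t := by
    intro t
    have h := (((hasDerivAt_id t).const_mul (2:ℝ)).neg).exp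
    simp only [id_eq, Pi.neg_apply] at h
    convert h using 1
    ring
  rcases le_or_gt 0 (p t₀ - u t₀) with h1 | h2
  · -- Case +∞
    set c₀ : ℝ := (p t₀ + u t₀) * Real.exp (-t₀) with hc₀def
    have hc₀ : 0 < c₀ := mul_pos (by linarith) (Real.exp_pos _)
    set G : ℝ → ℝ := fun t => u t * Real.exp t - c₀ / 2 * Real.exp (2 * t) with hGdef
    have hG : ∀ t, HasDerivAt G ((p t + u t) * Real.exp t - c₀ * Real.exp (2 * t)) t := by
      intro t
      have h := ((hu t).mul (Real.hasDerivAt_exp t)).sub ((he2 t).const_mul (c₀ / 2))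
      exact h.congr_deriv (by ring)
    have hGmono : MonotoneOn G (Set.Ici t₀) := by
      apply monotoneOn_of_deriv_nonneg (convex_Ici t₀)
        (fun t _ => ((hG t).differentiableAt).continuousAt.continuousWithinAt)
        (fun t _ => ((hG t).differentiableAt).differentiableWithinAt)
      intro x hx
      rw [interior_Ici] at hx
      rw [(hG x).deriv]
      have hWx : c₀ ≤ W x := hWmono hx.le
      have hid : Real.exp (-x) * Real.exp (2 * x) = Real.exp x := by
        rw [← Real.exp_add]; ring_nf
      have h3 := mul_le_mul_of_nonneg_right hWx (Real.exp_pos (2 * x)).le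
      have hWid : W x * Real.exp (2 * x) = (p x + u x) * Real.exp x := by
        rw [hWdef]; simp only; rw [mul_assoc, hid]
      rw [hWid] at h3
      linarith
    have hbound : ∀ t, t₀ ≤ t → G t₀ + c₀ / 2 * Real.exp (2 * t) ≤ u t * Real.exp t := by
      intro t ht
      have := hGmono (Set.self_mem_Ici) (Set.mem_Ici.2 ht) ht
      simp only [hGdef] at this ⊢
      linarith
    have hev1 := htop (c₀ / 4) (by positivity)
    have hev2 : ∀ᶠ t : ℝ in atTop, -G t₀ < c₀ / 4 * Real.exp (2 * t) := by
      have h2t : Tendsto (fun t : ℝ => 2 * t) atTop atTop :=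
        Tendsto.const_mul_atTop two_pos tendsto_id
      have hexp : Tendsto (fun t : ℝ => c₀ / 4 * Real.exp (2 * t)) atTop atTop :=
        (Real.tendsto_exp_atTop.comp h2t).const_mul_atTop (by positivity)
      exact hexp.eventually (eventually_gt_atTop (-G t₀))
    obtain ⟨t, ht0, hub, hlb⟩ := ((eventually_ge_atTop t₀).and (hev1.and hev2)).exists
    have hb := hbound t ht0
    have hmul := mul_le_mul_of_nonneg_right hub (Real.exp_pos t).le
    have hee : Real.exp t * Real.exp t = Real.exp (2 * t) := by
      rw [← Real.exp_add]; ring_nf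
    rw [mul_assoc, hee] at hmul
    linarith
  · -- Case -∞
    set c₁ : ℝ := -(p t₀ - u t₀) * Real.exp t₀ with hc₁def
    have hc₁ : 0 < c₁ := mul_pos (by linarith) (Real.exp_pos _)
    have hZt₀ : Z t₀ = -c₁ := by rw [hZdef, hc₁def]; ring
    set H : ℝ → ℝ := fun t => u t * Real.exp (-t) - c₁ / 2 * Real.exp (-(2 * t)) with hHdef
    have hH : ∀ t, HasDerivAt H ((p t - u t) * Real.exp (-t) + c₁ * Real.exp (-(2 * t))) t := by
      intro t
      have h := ((hu t).mul (hexpneg t)).sub ((hen2 t).const_mul (c₁ / 2))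
      exact h.congr_deriv (by ring)
    have hHanti : AntitoneOn H (Set.Iic t₀) := by
      apply antitoneOn_of_deriv_nonpos (convex_Iic t₀)
        (fun t _ => ((hH t).differentiableAt).continuousAt.continuousWithinAt)
        (fun t _ => ((hH t).differentiableAt).differentiableWithinAt)
      intro x hx
      rw [interior_Iic] at hx
      rw [(hH x).deriv]
      have hZx : Z x ≤ -c₁ := hZt₀ ▸ hZmono hx.le
      have hid : Real.exp x * Real.exp (-(2 * x)) = Real.exp (-x) := by
        rw [← Real.exp_add]; ring_nf
      have h3 := mul_le_mul_of_nonneg_right hZx (Real.exp_pos (-(2 * x))).le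
      have hZid : Z x * Real.exp (-(2 * x)) = (p x - u x) * Real.exp (-x) := by
        rw [hZdef]; simp only; rw [mul_assoc, hid]
      rw [hZid] at h3
      linarith
    have hbound : ∀ t, t ≤ t₀ → H t₀ + c₁ / 2 * Real.exp (-(2 * t)) ≤ u t * Real.exp (-t) := by
      intro t ht
      have := hHanti (Set.mem_Iic.2 ht) (Set.self_mem_Iic) ht
      simp only [hHdef] at this ⊢
      linarith
    have hev1 := hbot (c₁ / 4) (by positivity)
    have hev2 : ∀ᶠ t : ℝ in atBot, -H t₀ < c₁ / 4 * Real.exp (-(2 * t)) := by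
      have h2t : Tendsto (fun t : ℝ => -(2 * t)) atBot atTop :=
        tendsto_neg_atBot_atTop.comp (Tendsto.const_mul_atBot two_pos tendsto_id)
      have hexp : Tendsto (fun t : ℝ => c₁ / 4 * Real.exp (-(2 * t))) atBot atTop :=
        (Real.tendsto_exp_atTop.comp h2t).const_mul_atTop (by positivity)
      exact hexp.eventually (eventually_gt_atTop (-H t₀))
    obtain ⟨t, ht0, hub, hlb⟩ := ((eventually_le_atBot t₀).and (hev1.and hev2)).exists
    have hb := hbound t ht0
    have hmul := mul_le_mul_of_nonneg_right hub (Real.exp_pos (-t)).le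
    have hee : Real.exp (-t) * Real.exp (-t) = Real.exp (-(2 * t)) := by
      rw [← Real.exp_add]; ring_nf
    rw [mul_assoc, hee] at hmul
    linarith

open Filter Real in
theorem stmt8 (E : Type*) [NormedAddCommGroup E] [InnerProductSpace ℝ E]
    (I : ℝ → E) (hd1 : Differentiable ℝ I) (hd2 : Differentiable ℝ (deriv I))
    (R : ℝ → E →ₗ[ℝ] E)
    (hJacobi : ∀ t, deriv (deriv I) t + R t (I t) = 0)
    (hK : ∀ t, ∀ v : E, ⟪R t v, v⟫ ≤ -‖v‖ ^ 2)
    (hsubTop : (fun t => ‖I t‖) =o[Filter.atTop] fun t : ℝ => Real.exp |t|)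
    (hsubBot : (fun t => ‖I t‖) =o[Filter.atBot] fun t : ℝ => Real.exp |t|) :
    ∀ t, I t = 0 := by
  set s : ℝ → ℝ := fun t => Real.sqrt (⟪I t, I t⟫ + 1) with hsdef
  set u : ℝ → ℝ := fun t => s t - 1 with hudef
  set p : ℝ → ℝ := fun t => ⟪deriv I t, I t⟫ / s t with hpdef
  set q : ℝ → ℝ := fun t =>
    ((⟪deriv I t, deriv I t⟫ + ⟪deriv (deriv I) t, I t⟫) * s t -
      ⟪deriv I t, I t⟫ * (⟪deriv I t, I t⟫ / s t)) / s t ^ 2 with hqdef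
  have hbpos : ∀ t, (0:ℝ) < ⟪I t, I t⟫ + 1 := fun t => by
    have := real_inner_self_nonneg (x := I t); linarith
  have hspos : ∀ t, 0 < s t := fun t => Real.sqrt_pos.2 (hbpos t)
  have hssq : ∀ t, s t ^ 2 = ⟪I t, I t⟫ + 1 := fun t => Real.sq_sqrt (hbpos t).le
  have hs1 : ∀ t, 1 ≤ s t := fun t => by
    nlinarith [hspos t, hssq t, real_inner_self_nonneg (x := I t)]
  have hb' : ∀ t, HasDerivAt (fun t => ⟪I t, I t⟫ + 1)
      (⟪I t, deriv I t⟫ + ⟪deriv I t, I t⟫) t := fun t =>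
    (((hd1 t).hasDerivAt).inner ℝ ((hd1 t).hasDerivAt)).add_const 1
  have hsd : ∀ t, HasDerivAt s (p t) t := by
    intro t
    have h := (Real.hasDerivAt_sqrt (ne_of_gt (hbpos t))).comp t (hb' t)
    have heq : (1 / (2 * Real.sqrt (⟪I t, I t⟫ + 1))) *
        (⟪I t, deriv I t⟫ + ⟪deriv I t, I t⟫) = p t := by
      have hst : Real.sqrt (⟪I t, I t⟫ + 1) = s t := rfl
      rw [hst, hpdef]
      have hne := (hspos t).ne'
      field_simp
      rw [real_inner_comm (I t) (deriv I t)]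
      ring
    rw [← heq]
    exact h
  have hu : ∀ t, HasDerivAt u (p t) t := fun t => (hsd t).sub_const 1
  have hc' : ∀ t, HasDerivAt (fun t => ⟪deriv I t, I t⟫)
      (⟪deriv I t, deriv I t⟫ + ⟪deriv (deriv I) t, I t⟫) t := fun t => by
    exact ((hd2 t).hasDerivAt).inner ℝ ((hd1 t).hasDerivAt)
  have hp : ∀ t, HasDerivAt p (q t) t := fun t =>
    (hc' t).div (hsd t) (ne_of_gt (hspos t))
  have hq : ∀ t, u t ≤ q t := by
    intro t
    have hIdd : deriv (deriv I) t = -(R t (I t)) :=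
      eq_neg_of_add_eq_zero_left (hJacobi t)
    have hd : ⟪I t, I t⟫ ≤ ⟪deriv (deriv I) t, I t⟫ := by
      rw [hIdd, inner_neg_left]
      have h1 := hK t (I t)
      have h2 : ⟪I t, I t⟫ = ‖I t‖ ^ 2 := real_inner_self_eq_norm_sq (I t)
      linarith
    have hcs : ⟪deriv I t, I t⟫ * ⟪deriv I t, I t⟫ ≤
        ⟪deriv I t, deriv I t⟫ * ⟪I t, I t⟫ := real_inner_mul_inner_self_le _ _
    have ha : (0:ℝ) ≤ ⟪deriv I t, deriv I t⟫ := real_inner_self_nonneg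
    have hb0 : (0:ℝ) ≤ ⟪I t, I t⟫ := real_inner_self_nonneg
    have hd0 : (0:ℝ) ≤ ⟪deriv (deriv I) t, I t⟫ := le_trans hb0 hd
    show u t ≤ q t
    rw [hudef, hqdef]
    simp only
    rw [le_div_iff₀ (pow_pos (hspos t) 2)]
    refine (mul_le_mul_iff_of_pos_right (hspos t)).mp ?_
    have hmain : ((⟪deriv I t, deriv I t⟫ + ⟪deriv (deriv I) t, I t⟫) * s t -
        ⟪deriv I t, I t⟫ * (⟪deriv I t, I t⟫ / s t)) * s t =
        (⟪deriv I t, deriv I t⟫ + ⟪deriv (deriv I) t, I t⟫) * s t ^ 2 -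
        ⟪deriv I t, I t⟫ ^ 2 := by
      have hne := (hspos t).ne'
      field_simp
    rw [hmain]
    have hs3 : s t ^ 3 = (⟪I t, I t⟫ + 1) * s t := by rw [pow_succ, hssq t]
    have hs4 : s t ^ 4 = (⟪I t, I t⟫ + 1) ^ 2 := by
      rw [show (4:ℕ) = 2 * 2 from rfl, pow_mul, hssq t]
    nlinarith [hs3, hs4, hssq t, hcs, ha, hb0, hd0, hs1 t, hspos t,
      mul_le_mul_of_nonneg_right hd (hbpos t).le,
      mul_nonneg (hbpos t).le (sub_nonneg.2 (hs1 t)),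
      mul_nonneg ha (sub_nonneg.2 (hs1 t)),
      mul_nonneg hd0 (sub_nonneg.2 (hs1 t))]
  have hule : ∀ t, u t ≤ ‖I t‖ := by
    intro t
    have hle : s t ≤ ‖I t‖ + 1 := by
      rw [show ‖I t‖ + 1 = Real.sqrt ((‖I t‖ + 1) ^ 2) from
        (Real.sqrt_sq (by positivity)).symm]
      apply Real.sqrt_le_sqrt
      rw [real_inner_self_eq_norm_sq]
      nlinarith [norm_nonneg (I t)]
    rw [hudef]
    simp only
    linarith
  have htop' : ∀ ε > (0:ℝ), ∀ᶠ t in atTop, u t ≤ ε * Real.exp t := by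
    intro ε hε
    filter_upwards [Asymptotics.isLittleO_iff.mp hsubTop hε, eventually_ge_atTop (0:ℝ)]
      with t hbd ht0
    have h1 : ‖I t‖ ≤ ε * Real.exp |t| := by
      simpa [Real.norm_eq_abs, abs_of_nonneg (Real.exp_pos _).le] using hbd
    rw [abs_of_nonneg ht0] at h1
    exact le_trans (hule t) h1
  have hbot' : ∀ ε > (0:ℝ), ∀ᶠ t in atBot, u t ≤ ε * Real.exp (-t) := by
    intro ε hε
    filter_upwards [Asymptotics.isLittleO_iff.mp hsubBot hε, eventually_le_atBot (0:ℝ)]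
      with t hbd ht0
    have h1 : ‖I t‖ ≤ ε * Real.exp |t| := by
      simpa [Real.norm_eq_abs, abs_of_nonneg (Real.exp_pos _).le] using hbd
    rw [abs_of_nonpos ht0] at h1
    exact le_trans (hule t) h1
  have hu0 := growth_aux u p q hu hp hq htop' hbot'
  intro t
  have h : s t - 1 ≤ 0 := hu0 t
  have hinn : ⟪I t, I t⟫ ≤ 0 := by nlinarith [hssq t, hspos t]
  exact real_inner_self_nonpos.mp hinn
end
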